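/- Let D be a balanced open subset of a complex Banach space X, and suppose F : D → Y (Y a complex Banach space) admits on some neighborhood of 0 a representation F(h) = ∑_{k=0}^∞ P_k(h) where each P_k is continuous and homogeneous of degree k, and suppose F is bounded on bounded subsets of D and Fréchet holomorphic on D. Then the series ∑_{k=0}^∞ P_k(x) converges absolutely to F(x) for every x ∈ D. -/

import Mathlib

open Metric FormalMultilinearSeries

/-- If `D` is a balanced open set in a complex Banach space, `F` is
Fréchet holomorphic on `D`, bounded on bounded subsets of `D`, and near `0` is the sum
of a series of continuous `k`-homogeneous maps `P_k`, then `∑ P_k(x)` converges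
absolutely to `F(x)` for every `x ∈ D`. -/
theorem stmt14
    {X Y : Type*} [NormedAddCommGroup X] [NormedSpace ℂ X] [CompleteSpace X]
    [NormedAddCommGroup Y] [NormedSpace ℂ Y] [CompleteSpace Y]
    (D : Set X) (hDopen : IsOpen D)
    (hbal : ∀ x ∈ D, ∀ α : ℂ, ‖α‖ ≤ 1 → α • x ∈ D)
    (P : ℕ → X → Y) (hPcont : ∀ k, Continuous (P k))
    (hPhom : ∀ k (lam : ℂ) (v : X), P k (lam • v) = lam ^ k • P k v)
    (F : X → Y)
    (hFhol : DifferentiableOn ℂ F D)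
    (hFbdd : ∀ C : ℝ, ∃ M : ℝ, ∀ x ∈ D, ‖x‖ ≤ C → ‖F x‖ ≤ M)
    (hser : ∃ ε > 0, Metric.ball (0 : X) ε ⊆ D ∧
      ∀ h : X, ‖h‖ < ε → HasSum (fun k : ℕ => P k h) (F h)) :
    ∀ x ∈ D, Summable (fun k : ℕ => ‖P k x‖) ∧
      HasSum (fun k : ℕ => P k x) (F x) := by
  obtain ⟨ε, hε, hballD, hsum⟩ := hser
  intro x hx
  set ψ : ℂ → Y := fun lam => F (lam • x) with hψdef
  set U : Set ℂ := {lam : ℂ | lam • x ∈ D} with hUdef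
  have hUopen : IsOpen U := hDopen.preimage (continuous_id.smul continuous_const)
  have hsubU : Metric.closedBall (0 : ℂ) 1 ⊆ U := by
    intro lam hlam
    exact hbal x hx lam (by simpa using hlam)
  obtain ⟨δ, hδpos, hthick⟩ :=
    (isCompact_closedBall (0 : ℂ) 1).exists_thickening_subset_open hUopen hsubU
  have hballU : Metric.ball (0 : ℂ) (δ + 1) ⊆ U := by
    rw [← thickening_closedBall hδpos zero_le_one]
    exact hthick
  set r : NNReal := ⟨δ / 2 + 1, by positivity⟩ with hrdef
  have hrcoe : (r : ℝ) = δ / 2 + 1 := rfl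
  have hψdiff : DifferentiableOn ℂ ψ (Metric.closedBall (0 : ℂ) r) := by
    apply hFhol.comp ((differentiable_id.smul_const x).differentiableOn)
    intro lam hlam
    apply hballU
    have : ‖lam‖ ≤ δ / 2 + 1 := by simpa [hrcoe] using hlam
    simp only [Metric.mem_ball, dist_zero_right, id_eq, Function.comp]
    linarith
  have hrpos : 0 < r := by
    rw [← NNReal.coe_pos, hrcoe]; positivity
  have hf : HasFPowerSeriesOnBall ψ (cauchyPowerSeries ψ 0 r) 0 r :=
    hψdiff.hasFPowerSeriesOnBall hrpos
  -- the candidate power series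
  set q : FormalMultilinearSeries ℂ ℂ Y :=
    fun n => ContinuousMultilinearMap.mkPiRing ℂ (Fin n) (P n x) with hqdef
  have hqapp : ∀ n (lam : ℂ), (q n fun _ => lam) = lam ^ n • P n x := by
    intro n lam
    simp [hqdef, ContinuousMultilinearMap.mkPiRing_apply]
  have hqnorm : ∀ n, ‖q n‖ = ‖P n x‖ := fun n =>
    ContinuousMultilinearMap.norm_mkPiRing (P n x)
  -- small radius on which q represents ψ
  set t : ℝ := ε / (2 * (‖x‖ + 1)) with htdef
  have hxpos : (0:ℝ) < ‖x‖ + 1 := by positivity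
  have htpos : 0 < t := by positivity
  have hsmall : ∀ lam : ℂ, ‖lam‖ < t → ‖lam • x‖ < ε := by
    intro lam hlam
    have h1 : ‖lam • x‖ = ‖lam‖ * ‖x‖ := norm_smul _ _
    have h2 : ‖lam‖ * ‖x‖ ≤ ‖lam‖ * (‖x‖ + 1) :=
      mul_le_mul_of_nonneg_left (by linarith) (norm_nonneg _)
    have h3 : ‖lam‖ * (‖x‖ + 1) < t * (‖x‖ + 1) :=
      mul_lt_mul_of_pos_right hlam hxpos
    have h4 : t * (‖x‖ + 1) = ε / 2 := by
      rw [htdef]; field_simp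
    linarith [half_lt_self hε]
  have hqsum : ∀ lam : ℂ, ‖lam‖ < t →
      HasSum (fun n => q n fun _ => lam) (ψ lam) := by
    intro lam hlam
    have := hsum (lam • x) (hsmall lam hlam)
    simpa [hψdef, hqapp, hPhom] using this
  -- radius bound for q
  set t' : NNReal := ⟨t / 2, by positivity⟩ with ht'def
  have ht'coe : (t' : ℝ) = t / 2 := rfl
  have ht'lt : (t' : ℝ) < t := by rw [ht'coe]; linarith
  have ht'pos : 0 < t' := by rw [← NNReal.coe_pos, ht'coe]; positivity
  have hradius : (t' : ENNReal) ≤ q.radius := by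
    apply FormalMultilinearSeries.le_radius_of_tendsto q (l := 0)
    have hs : HasSum (fun n => q n fun _ => ((t' : ℝ) : ℂ)) (ψ ((t' : ℝ) : ℂ)) := by
      apply hqsum
      simpa using ht'lt
    have h0 : Filter.Tendsto (fun n => q n fun _ => ((t' : ℝ) : ℂ)) Filter.atTop (nhds 0) :=
      hs.summable.tendsto_atTop_zero
    have h0' := h0.norm
    simp only [norm_zero] at h0'
    convert h0' using 2 with n
    rw [hqapp, norm_smul, hqnorm, norm_pow, mul_comm]
    congr 1
    rw [Complex.norm_real, Real.norm_eq_abs, abs_of_nonneg t'.coe_nonneg]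
  have hq : HasFPowerSeriesOnBall ψ q 0 t' := by
    refine ⟨hradius, by exact_mod_cast ht'pos, ?_⟩
    intro y hy
    rw [mem_emetric_ball_zero_iff] at hy
    have hy' : ‖y‖ < t := lt_trans (by exact_mod_cast hy) ht'lt
    simpa using hqsum y hy'
  -- uniqueness of power series
  have heq : cauchyPowerSeries ψ 0 r = q :=
    hf.hasFPowerSeriesAt.eq_formalMultilinearSeries hq.hasFPowerSeriesAt
  rw [heq] at hf
  have h1mem : (1 : ℂ) ∈ Metric.eball (0 : ℂ) r := by
    rw [mem_emetric_ball_zero_iff]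
    have h1 : ‖(1:ℂ)‖ₑ = 1 := by simp
    rw [h1]
    have : (1 : NNReal) < r := by
      rw [← NNReal.coe_lt_coe, hrcoe, NNReal.coe_one]
      linarith
    exact_mod_cast this
  have hqone : ∀ n, (q n fun _ => (1 : ℂ)) = P n x := by
    intro n; rw [hqapp]; simp
  constructor
  · have := q.summable_norm_apply (x := (1 : ℂ)) (lt_of_lt_of_le (by simpa using h1mem) hf.r_le)
    simpa [hqone] using this
  · have := hf.hasSum h1mem
    simpa [hqone, hψdef] using this
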